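/- If G is a group and N is a normal subgroup of G of finite index such that N is Jordan, then G is Jordan. -/

import Mathlib

/-- A group `G` is Jordan with constant `J` if every finite subgroup of `G`
contains a normal abelian subgroup of index at most `J`. -/
def IsJordanWith (J : ℕ) (G : Type*) [Group G] : Prop :=
  ∀ H : Subgroup G, Finite H →
    ∃ A : Subgroup H, A.Normal ∧ (∀ a b : A, a * b = b * a) ∧ A.index ≤ J

/-- A group is Jordan if it is Jordan with some positive constant. -/
def IsJordanGroup (G : Type*) [Group G] : Prop := ∃ J : ℕ, 0 < J ∧ IsJordanWith J G

/-- In a finite group, the normal core of a subgroup of index `n` has index at most `n!`. -/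
theorem index_normalCore_le_factorial {H : Type*} [Group H] [Finite H] (K : Subgroup H) :
    K.normalCore.index ≤ (K.index).factorial := by
  have : Fintype (H ⧸ K) := Fintype.ofFinite _
  have : DecidableEq (H ⧸ K) := Classical.decEq _
  rw [Subgroup.normalCore_eq_ker, Subgroup.index_ker]
  calc Nat.card (MulAction.toPermHom H (H ⧸ K)).range
      ≤ Nat.card (Equiv.Perm (H ⧸ K)) := Subgroup.card_le_card_group _
    _ = (Nat.card (H ⧸ K)).factorial := by
        rw [Nat.card_eq_fintype_card, Fintype.card_perm, ← Nat.card_eq_fintype_card]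
    _ = (K.index).factorial := by rw [Subgroup.index_eq_card]

/-- If `N` is a normal subgroup of finite index in `G` and `N` is Jordan, then `G` is Jordan. -/
theorem isJordan_of_normal_finiteIndex {G : Type*} [Group G] (N : Subgroup G) [N.Normal]
    (hN : N.index ≠ 0) (h : IsJordanGroup N) : IsJordanGroup G := by
  obtain ⟨J, hJpos, hJ⟩ := h
  refine ⟨(J * N.index).factorial, Nat.factorial_pos _, ?_⟩
  intro H hH
  haveI : Finite H := hH
  set B : Subgroup G := H ⊓ N with hBdef
  have hBH : B ≤ H := inf_le_left
  have hBN : B ≤ N := inf_le_right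
  haveI hBfin : Finite B :=
    Finite.of_equiv _ (Subgroup.subgroupOfEquivOfLe hBH).toEquiv
  set B' : Subgroup N := B.subgroupOf N with hB'def
  haveI hB'fin : Finite B' :=
    Finite.of_equiv _ (Subgroup.subgroupOfEquivOfLe hBN).symm.toEquiv
  obtain ⟨A, hAnorm, hAab, hAidx⟩ := hJ B' hB'fin
  -- push A down to a subgroup of G
  set A₁ : Subgroup G := (A.map B'.subtype).map N.subtype with hA₁def
  have hA₁B : A₁ ≤ B := by
    have h1 : A.map B'.subtype ≤ B' := Subgroup.map_subtype_le A
    have h2 : A₁ ≤ B'.map N.subtype := Subgroup.map_mono h1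
    rwa [hB'def, Subgroup.subgroupOf_map_subtype, inf_of_le_left hBN] at h2
  have hA₁H : A₁ ≤ H := hA₁B.trans hBH
  -- elements of A₁ commute
  have hcomm : ∀ x ∈ A₁, ∀ y ∈ A₁, x * y = y * x := by
    rintro x hx y hy
    rw [hA₁def] at hx hy
    obtain ⟨a, ha, rfl⟩ := hx
    obtain ⟨a', ha', rfl⟩ := ha
    obtain ⟨b, hb, rfl⟩ := hy
    obtain ⟨b', hb', rfl⟩ := hb
    have := congrArg (fun z : A => (((z : B') : N) : G)) (hAab ⟨a', ha'⟩ ⟨b', hb'⟩)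
    simpa using this
  -- card of A₁ equals card of A
  have hcardA₁ : Nat.card A₁ = Nat.card A := by
    rw [hA₁def]
    have e1 : A.map B'.subtype ≃* A := (A.equivMapOfInjective _ B'.subtype_injective).symm
    have e2 : (A.map B'.subtype).map N.subtype ≃* A.map B'.subtype :=
      ((A.map B'.subtype).equivMapOfInjective _ N.subtype_injective).symm
    rw [Nat.card_congr e2.toEquiv, Nat.card_congr e1.toEquiv]
  -- relindex of A₁ in B equals index of A
  have hrel : A₁.relIndex B = A.index := by
    have hBcard : Nat.card B' = Nat.card B :=
      Nat.card_congr (Subgroup.subgroupOfEquivOfLe hBN).toEquiv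
    have h1 : Nat.card A * A.index = Nat.card B := by
      rw [Subgroup.card_mul_index, hBcard]
    have h2 : Nat.card A * (A₁.relIndex B) = Nat.card B := by
      have hc : Nat.card (A₁.subgroupOf B) = Nat.card A₁ :=
        Nat.card_congr (Subgroup.subgroupOfEquivOfLe hA₁B).toEquiv
      rw [Subgroup.relIndex, ← hcardA₁, ← hc, Subgroup.card_mul_index]
    have hA0 : Nat.card A ≠ 0 := Nat.card_pos.ne'
    exact mul_left_cancel₀ hA0 (h2.trans h1.symm)
  -- relindex of B in H is at most N.index
  have hrelB : B.relIndex H ≤ N.index := by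
    have : B.relIndex H = N.relIndex H := by
      rw [Subgroup.relIndex, Subgroup.relIndex, hBdef, Subgroup.inf_subgroupOf_left]
    rw [this]
    exact Nat.le_of_dvd (Nat.pos_of_ne_zero hN) (Subgroup.relIndex_dvd_index_of_normal N H)
  -- total relindex bound
  have hrelH : A₁.relIndex H ≤ J * N.index := by
    rw [← Subgroup.relIndex_mul_relIndex A₁ B H hA₁B hBH, hrel]
    exact Nat.mul_le_mul hAidx hrelB
  -- take the normal core
  refine ⟨(A₁.subgroupOf H).normalCore, Subgroup.normalCore_normal _, ?_, ?_⟩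
  · intro a b
    have ha : ((a : H) : G) ∈ A₁ :=
      Subgroup.mem_subgroupOf.mp (Subgroup.normalCore_le (A₁.subgroupOf H) a.2)
    have hb : ((b : H) : G) ∈ A₁ :=
      Subgroup.mem_subgroupOf.mp (Subgroup.normalCore_le (A₁.subgroupOf H) b.2)
    exact Subtype.ext (Subtype.ext (hcomm _ ha _ hb))
  · calc (A₁.subgroupOf H).normalCore.index
        ≤ ((A₁.subgroupOf H).index).factorial := index_normalCore_le_factorial _
      _ ≤ (J * N.index).factorial := Nat.factorial_le hrelH
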